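/- Let E₁,…,E_{m−1} be l × l real matrices with Eᵢᵀ = −Eᵢ, Eᵢ² = −I, and Eᵢ·Eⱼ = −Eⱼ·Eᵢ for i ≠ j; let α, β > 0 with α² + β² = 1; and let (u,v) ∈ V₂^{α,β}. Suppose x ∈ ℝˡ satisfies |x| = α, ⟨x,u⟩ = 0, ⟨x,v⟩ = 0, and ⟨x, Eᵢv⟩ = 0 for 1 ≤ i ≤ m−1. Then the curve γ(t) = (cos t·u + sin t·x, v) satisfies γ(t) ∈ V₂^{α,β} for all t ∈ ℝ and γ(0) = (u,v); moreover, the curve t ↦ ξ(γ(t)), where ξ(u,v) = (−(β/α)·u, (α/β)·v), has derivative at t = 0 equal to −(β/α) times the derivative of γ at t = 0, and γ′(0) = (x, 0). -/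

import Mathlib

open scoped RealInnerProductSpace
open Matrix

/-- The action of an `l × l` real matrix on `EuclideanSpace ℝ (Fin l)`. -/
noncomputable def matAct {l : ℕ} (A : Matrix (Fin l) (Fin l) ℝ)
    (u : EuclideanSpace ℝ (Fin l)) : EuclideanSpace ℝ (Fin l) :=
  (WithLp.equiv 2 (Fin l → ℝ)).symm (A.mulVec (WithLp.equiv 2 (Fin l → ℝ) u))

/-- Pinkall–Thorbergsson's deformed Clifford–Stiefel manifold `V₂^{α,β}`. -/
noncomputable def cliffordV2ab (l m : ℕ) (E : Fin (m - 1) → Matrix (Fin l) (Fin l) ℝ)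
    (α β : ℝ) : Set (EuclideanSpace ℝ (Fin l) × EuclideanSpace ℝ (Fin l)) :=
  {p | ‖p.1‖ = α ∧ ‖p.2‖ = β ∧ ⟪p.1, p.2⟫ = 0 ∧
    ∀ i : Fin (m - 1), ⟪matAct (E i) p.1, p.2⟫ = 0}

/-- The unit normal field `ξ(u,v) = (−(β/α)·u, (α/β)·v)` on `V₂^{α,β}`. -/
noncomputable def xiField {l : ℕ} (α β : ℝ)
    (p : EuclideanSpace ℝ (Fin l) × EuclideanSpace ℝ (Fin l)) :
    EuclideanSpace ℝ (Fin l) × EuclideanSpace ℝ (Fin l) :=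
  ((-(β / α)) • p.1, (α / β) • p.2)

lemma matAct_add {l : ℕ} (A : Matrix (Fin l) (Fin l) ℝ) (p q : EuclideanSpace ℝ (Fin l)) :
    matAct A (p + q) = matAct A p + matAct A q := by
  ext i
  simp [matAct, Matrix.mulVec_add]

lemma matAct_smul {l : ℕ} (A : Matrix (Fin l) (Fin l) ℝ) (c : ℝ) (p : EuclideanSpace ℝ (Fin l)) :
    matAct A (c • p) = c • matAct A p := by
  ext i
  simp [matAct, Matrix.mulVec_smul]

lemma matAct_neg {l : ℕ} (A : Matrix (Fin l) (Fin l) ℝ) (p : EuclideanSpace ℝ (Fin l)) :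
    matAct (-A) p = -matAct A p := by
  ext i
  simp [matAct, Matrix.neg_mulVec]

lemma inner_matAct_left {l : ℕ} (A : Matrix (Fin l) (Fin l) ℝ)
    (p q : EuclideanSpace ℝ (Fin l)) :
    ⟪matAct A p, q⟫ = ⟪p, matAct A.transpose q⟫ := by
  have h : (A.mulVec (fun i => p i)) ⬝ᵥ (fun i => q i)
      = (fun i => p i) ⬝ᵥ (A.transpose.mulVec (fun i => q i)) := by
    rw [dotProduct_comm, Matrix.dotProduct_mulVec, Matrix.mulVec_transpose,
      dotProduct_comm]
  simpa [matAct, PiLp.inner_apply, dotProduct, mul_comm] using h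

lemma eq_of_sq_eq_sq' (a b : ℝ) (ha : 0 ≤ a) (hb : 0 ≤ b) (h : a ^ 2 = b ^ 2) : a = b := by
  have h2 : (a - b) * (a + b) = 0 := by ring_nf; linarith
  rcases mul_eq_zero.mp h2 with h3 | h3 <;> linarith

/-- Let `E₁,…,E_{m−1}` be a Clifford system, `α, β > 0` with `α² + β² = 1`, and
`(u,v) ∈ V₂^{α,β}`.  Suppose `x ∈ ℝˡ` satisfies `|x| = α`, `⟨x,u⟩ = 0`, `⟨x,v⟩ = 0`,
and `⟨x, Eᵢv⟩ = 0` for all `i`.  Then the curve `γ(t) = (cos t·u + sin t·x, v)` lies in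
`V₂^{α,β}`, passes through `(u,v)` at `t = 0`, and the curve `t ↦ ξ(γ(t))` has derivative
at `t = 0` equal to `−(β/α)` times `γ′(0)`, where `γ′(0) = (x, 0)`. -/
theorem principal_curvature_beta_div_alpha (l m : ℕ)
    (E : Fin (m - 1) → Matrix (Fin l) (Fin l) ℝ)
    (hskew : ∀ i, (E i).transpose = -(E i))
    (hsq : ∀ i, E i * E i = -1)
    (hanti : ∀ i j, i ≠ j → E i * E j = -(E j * E i))
    (α β : ℝ) (hα : 0 < α) (hβ : 0 < β) (hαβ : α ^ 2 + β ^ 2 = 1)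
    (u v : EuclideanSpace ℝ (Fin l)) (huv : (u, v) ∈ cliffordV2ab l m E α β)
    (x : EuclideanSpace ℝ (Fin l)) (hx : ‖x‖ = α) (hxu : ⟪x, u⟫ = 0) (hxv : ⟪x, v⟫ = 0)
    (hxE : ∀ i : Fin (m - 1), ⟪x, matAct (E i) v⟫ = 0) :
    (∀ t : ℝ, (Real.cos t • u + Real.sin t • x, v) ∈ cliffordV2ab l m E α β) ∧
    ((Real.cos (0:ℝ)) • u + (Real.sin (0:ℝ)) • x, v) = (u, v) ∧
    deriv (fun t : ℝ => xiField α β (Real.cos t • u + Real.sin t • x, v)) 0 =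
      (-(β / α)) • deriv (fun t : ℝ =>
        ((Real.cos t • u + Real.sin t • x, v) :
          EuclideanSpace ℝ (Fin l) × EuclideanSpace ℝ (Fin l))) 0 ∧
    deriv (fun t : ℝ =>
        ((Real.cos t • u + Real.sin t • x, v) :
          EuclideanSpace ℝ (Fin l) × EuclideanSpace ℝ (Fin l))) 0 = (x, 0) := by
  obtain ⟨hu, hv, huv0, hE⟩ := huv
  have hux : ⟪u, x⟫ = 0 := by rw [real_inner_comm]; exact hxu
  -- the Eᵢ-inner product of x with v on the other side
  have hEx : ∀ i, ⟪matAct (E i) x, v⟫ = 0 := by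
    intro i
    rw [inner_matAct_left, hskew i, matAct_neg, inner_neg_right, hxE i, neg_zero]
  -- derivative of the curve
  have hcurve : HasDerivAt (fun t : ℝ => Real.cos t • u + Real.sin t • x) x 0 := by
    have h1 := (Real.hasDerivAt_cos 0).smul_const u
    have h2 := (Real.hasDerivAt_sin 0).smul_const x
    have := h1.add h2
    simp at this
    exact this
  have hγ : HasDerivAt (fun t : ℝ =>
      ((Real.cos t • u + Real.sin t • x, v) :
        EuclideanSpace ℝ (Fin l) × EuclideanSpace ℝ (Fin l)))
      ((x, 0) : EuclideanSpace ℝ (Fin l) × EuclideanSpace ℝ (Fin l)) 0 :=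
    hcurve.prodMk (hasDerivAt_const 0 v)
  have hξ : HasDerivAt (fun t : ℝ => xiField α β (Real.cos t • u + Real.sin t • x, v))
      (((-(β / α)) • x, 0) : EuclideanSpace ℝ (Fin l) × EuclideanSpace ℝ (Fin l)) 0 := by
    have h1 := hcurve.const_smul (-(β / α))
    exact h1.prodMk (hasDerivAt_const 0 ((α / β) • v))
  refine ⟨?_, by simp, ?_, hγ.deriv⟩
  · intro t
    refine ⟨?_, hv, ?_, ?_⟩
    · apply eq_of_sq_eq_sq' _ _ (norm_nonneg _) hα.le
      have hsum : ⟪Real.cos t • u + Real.sin t • x, Real.cos t • u + Real.sin t • x⟫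
          = Real.cos t ^ 2 * α ^ 2 + Real.sin t ^ 2 * α ^ 2 := by
        have huu : ⟪u, u⟫ = α ^ 2 := by
          rw [real_inner_self_eq_norm_sq, hu]
        have hxx : ⟪x, x⟫ = α ^ 2 := by
          rw [real_inner_self_eq_norm_sq, hx]
        simp only [inner_add_left, inner_add_right, real_inner_smul_left,
          real_inner_smul_right, huu, hxx, hux, hxu]
        ring
      have := real_inner_self_eq_norm_sq (Real.cos t • u + Real.sin t • x)
      rw [hsum] at this
      rw [← this]
      have := Real.sin_sq_add_cos_sq t
      nlinarith
    · simp only [inner_add_left, real_inner_smul_left, huv0, hxv]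
      ring
    · intro i
      rw [matAct_add, matAct_smul, matAct_smul, inner_add_left, real_inner_smul_left,
        real_inner_smul_left, hE i, hEx i]
      ring
  · rw [hξ.deriv, hγ.deriv]
    simp [Prod.smul_mk]
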